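/- arXiv:1805.10678 — 3 statements merged into one kernel-verified Lean document; each statement's English description precedes it below -/
import Mathlib

section
/- Let C be an n×n real symmetric matrix, L₁ ≥ 0 with ‖2C x₁ − 2C x₂‖ ≤ L₁‖x₁ − x₂‖ for all x₁, x₂, and L_H ≥ 0 with −L_H I ⪯ 2C. Suppose sequences x^k, y^k, μ^k ⊂ ℝⁿ and ρ^k > 0 with ρ^{k+1} = α ρ^k, α > 0, satisfy the ADMM updates: y^{k+1} minimizes y ↦ ‖x^k − y + μ^k/ρ^k‖² over y ∈ {−1,1}ⁿ; x^{k+1} minimizes x ↦ xᵀCx + (ρ^k/2)‖x − y^{k+1} + μ^k/ρ^k‖² over ℝⁿ; and μ^{k+1} = μ^k + ρ^k(x^{k+1} − y^{k+1}). If for every k one has ρ^k > L_H and (ρ^k)² − L_H ρ^k − (α+1)L₁² > 0, then the augmented Lagrangian monotonically decreases: L(x^{k+1}, y^{k+1}; μ^{k+1}; ρ^{k+1}) − L(x^k, y^k; μ^k; ρ^k) ≤ −c₁^k ‖x^{k+1} − x^k‖², where c₁^k = (ρ^k − L_H)/2 − (α+1)L₁²/(2ρ^k) > 0. -/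
/-- Euclidean norm of a vector in `ℝⁿ`. -/
noncomputable def vnorm {n : ℕ} (x : Fin n → ℝ) : ℝ := Real.sqrt (∑ i, (x i) ^ 2)

/-- Euclidean inner product on `ℝⁿ`. -/
def vdot {n : ℕ} (x y : Fin n → ℝ) : ℝ := ∑ i, x i * y i

/-- Vector-form augmented Lagrangian `L(x,y;μ;ρ) = xᵀCx + ⟨μ, x−y⟩ + (ρ/2)‖x−y‖²`. -/
noncomputable def lagr {n : ℕ} (C : Matrix (Fin n) (Fin n) ℝ) (x y μ : Fin n → ℝ)
    (ρ : ℝ) : ℝ :=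
  vdot x (C.mulVec x) + vdot μ (x - y) + ρ / 2 * vnorm (x - y) ^ 2

lemma vdot_eq {n : ℕ} (x y : Fin n → ℝ) : vdot x y = dotProduct x y := rfl

lemma vdot_self_nonneg {n : ℕ} (v : Fin n → ℝ) : 0 ≤ vdot v v :=
  Finset.sum_nonneg fun i _ => mul_self_nonneg _

lemma vnorm_sq {n : ℕ} (v : Fin n → ℝ) : vnorm v ^ 2 = vdot v v := by
  rw [vnorm, Real.sq_sqrt (by positivity)]
  simp [vdot, sq]

lemma vnorm_nonneg' {n : ℕ} (v : Fin n → ℝ) : 0 ≤ vnorm v := Real.sqrt_nonneg _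

lemma vdot_symmC {n : ℕ} (C : Matrix (Fin n) (Fin n) ℝ) (hC : C.IsSymm) (v w : Fin n → ℝ) :
    vdot v (C.mulVec w) = vdot w (C.mulVec v) := by
  rw [vdot_eq, vdot_eq, Matrix.dotProduct_mulVec, ← Matrix.mulVec_transpose, hC.eq,
    dotProduct_comm]

lemma quad_expand {n : ℕ} (C : Matrix (Fin n) (Fin n) ℝ) (hC : C.IsSymm)
    (u d b : Fin n → ℝ) (r t : ℝ) :
    vdot (u + t • d) (C.mulVec (u + t • d)) + r / 2 * vdot (u + t • d - b) (u + t • d - b)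
    = (vdot u (C.mulVec u) + r / 2 * vdot (u - b) (u - b))
      + t * vdot ((2 : ℝ) • C.mulVec u + r • (u - b)) d
      + t ^ 2 * (vdot d (C.mulVec d) + r / 2 * vdot d d) := by
  have h1 : vdot d (C.mulVec u) = vdot u (C.mulVec d) := vdot_symmC C hC d u
  have h2 : u + t • d - b = (u - b) + t • d := by abel
  simp only [vdot_eq, h2, Matrix.mulVec_add, Matrix.mulVec_smul, add_dotProduct,
    dotProduct_add, smul_dotProduct, dotProduct_smul,
    sub_dotProduct, dotProduct_sub, smul_eq_mul]
  rw [← vdot_eq d (C.mulVec u), ← vdot_eq u (C.mulVec d), h1]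
  have e1 : dotProduct (C.mulVec u) d = vdot u (C.mulVec d) := by
    rw [dotProduct_comm]; rw [← vdot_eq]; exact h1
  have e2 : dotProduct d u = dotProduct u d := dotProduct_comm _ _
  have e3 : dotProduct d b = dotProduct b d := dotProduct_comm _ _
  have e4 : dotProduct b u = dotProduct u b := dotProduct_comm _ _
  have e5 : dotProduct d (C.mulVec d) = vdot d (C.mulVec d) := rfl
  rw [e1, e2, e3, e4, e5]
  ring

lemma vdot_eq_zero {n : ℕ} (g : Fin n → ℝ) (h : vdot g g = 0) : g = 0 := by
  funext i
  have h2 := (Finset.sum_eq_zero_iff_of_nonneg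
    (fun j _ => mul_self_nonneg (g j))).1 h i (Finset.mem_univ i)
  exact mul_self_eq_zero.1 h2

lemma vdot_neg_neg {n : ℕ} (v : Fin n → ℝ) : vdot (-v) (-v) = vdot v v := by
  simp [vdot]

lemma lagr_eq' {n : ℕ} (C : Matrix (Fin n) (Fin n) ℝ) (x y μ : Fin n → ℝ) (r : ℝ)
    (hr : r ≠ 0) :
    (vdot x (C.mulVec x) + vdot μ (x - y) + r / 2 * vnorm (x - y) ^ 2)
      = vdot x (C.mulVec x) + r / 2 * vdot (x - y + r⁻¹ • μ) (x - y + r⁻¹ • μ)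
        - 1 / (2 * r) * vdot μ μ := by
  rw [vnorm_sq]
  simp only [vdot_eq, add_dotProduct, dotProduct_add, sub_dotProduct,
    dotProduct_sub, smul_dotProduct, dotProduct_smul, smul_eq_mul]
  have c1 : dotProduct μ x = dotProduct x μ := dotProduct_comm _ _
  have c2 : dotProduct μ y = dotProduct y μ := dotProduct_comm _ _
  have c3 : dotProduct y x = dotProduct x y := dotProduct_comm _ _
  rw [c1, c2, c3]
  field_simp
  ring


lemma grad_zero {n : ℕ} (C : Matrix (Fin n) (Fin n) ℝ) (hC : C.IsSymm) (L_H r : ℝ)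
    (hr : L_H < r)
    (hssr : ∀ e : Fin n → ℝ,
      (r - L_H) / 2 * vdot e e ≤ vdot e (C.mulVec e) + r / 2 * vdot e e)
    (u b : Fin n → ℝ)
    (hmin : ∀ w : Fin n → ℝ, vdot u (C.mulVec u) + r / 2 * vdot (u - b) (u - b)
        ≤ vdot w (C.mulVec w) + r / 2 * vdot (w - b) (w - b)) :
    (2 : ℝ) • C.mulVec u + r • (u - b) = 0 := by
  obtain ⟨g, hg⟩ : ∃ g, g = (2 : ℝ) • C.mulVec u + r • (u - b) := ⟨_, rfl⟩
  obtain ⟨s, hsdef⟩ : ∃ s, s = vdot g (C.mulVec g) + r / 2 * vdot g g := ⟨_, rfl⟩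
  have hs : 0 ≤ s := by
    rw [hsdef]
    have h1 := hssr g
    have h3 : 0 ≤ (r - L_H) / 2 * vdot g g :=
      mul_nonneg (by linarith) (vdot_self_nonneg g)
    linarith
  have h5 : ∀ t : ℝ, 0 ≤ t * vdot g g + t ^ 2 * s := by
    intro t
    have hexp := quad_expand C hC u g b r t
    have hm := hmin (u + t • g)
    rw [hexp, ← hg, ← hsdef] at hm
    linarith
  obtain ⟨A, hAdef⟩ : ∃ A, A = vdot g g := ⟨_, rfl⟩
  have hA : A = 0 := by
    have hA0 : 0 ≤ A := by rw [hAdef]; exact vdot_self_nonneg g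
    have h7 := h5 (-(A / (s + 1)))
    rw [← hAdef] at h7
    have h8 : (0 : ℝ) < s + 1 := by linarith
    have h8' : (s + 1 : ℝ) ≠ 0 := ne_of_gt h8
    have hkey : -(A / (s + 1)) * A + (-(A / (s + 1))) ^ 2 * s = -(A ^ 2 / (s + 1) ^ 2) := by
      field_simp
      ring
    rw [hkey] at h7
    have h12 : A ^ 2 / (s + 1) ^ 2 = 0 := le_antisymm (by linarith) (by positivity)
    rcases div_eq_zero_iff.mp h12 with h13 | h13
    · exact pow_eq_zero_iff two_ne_zero |>.mp h13
    · exact absurd h13 (by positivity)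
  have hg0 : g = 0 := vdot_eq_zero g (hAdef ▸ hA)
  rw [← hg]
  exact hg0

/-- monotone decrease of the augmented Lagrangian along the vector-form ADMM
iterates: `L^{k+1} − L^k ≤ −c₁^k ‖x^{k+1} − x^k‖²` with
`c₁^k = (ρ^k − L_H)/2 − (α+1)L₁²/(2ρ^k) > 0`. -/
theorem stmt3 {n : ℕ} (C : Matrix (Fin n) (Fin n) ℝ) (hC : C.IsSymm)
    (L1 L_H α : ℝ) (hL1 : 0 ≤ L1) (hLH : 0 ≤ L_H) (hα : 0 < α)
    (hLip : ∀ x₁ x₂ : Fin n → ℝ,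
      vnorm ((2 : ℝ) • C.mulVec x₁ - (2 : ℝ) • C.mulVec x₂) ≤ L1 * vnorm (x₁ - x₂))
    (hHess : ((2 : ℝ) • C + L_H • (1 : Matrix (Fin n) (Fin n) ℝ)).PosSemidef)
    (x y μ : ℕ → Fin n → ℝ) (ρ : ℕ → ℝ)
    (hρpos : ∀ k, 0 < ρ k) (hρupd : ∀ k, ρ (k + 1) = α * ρ k)
    -- y-update: `y^{k+1}` minimizes `y ↦ ‖x^k − y + μ^k/ρ^k‖²` over `y ∈ {−1,1}ⁿ`
    (hy : ∀ k, (∀ i, y (k + 1) i = 1 ∨ y (k + 1) i = -1) ∧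
      ∀ w : Fin n → ℝ, (∀ i, w i = 1 ∨ w i = -1) →
        vnorm (x k - y (k + 1) + (ρ k)⁻¹ • μ k) ^ 2
          ≤ vnorm (x k - w + (ρ k)⁻¹ • μ k) ^ 2)
    -- x-update: `x^{k+1}` minimizes `x ↦ xᵀCx + (ρ^k/2)‖x − y^{k+1} + μ^k/ρ^k‖²` over `ℝⁿ`
    (hx : ∀ k, ∀ w : Fin n → ℝ,
      vdot (x (k + 1)) (C.mulVec (x (k + 1)))
          + ρ k / 2 * vnorm (x (k + 1) - y (k + 1) + (ρ k)⁻¹ • μ k) ^ 2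
        ≤ vdot w (C.mulVec w) + ρ k / 2 * vnorm (w - y (k + 1) + (ρ k)⁻¹ • μ k) ^ 2)
    -- dual update
    (hμ : ∀ k, μ (k + 1) = μ k + ρ k • (x (k + 1) - y (k + 1)))
    (hρLH : ∀ k, L_H < ρ k)
    (hquad : ∀ k, (ρ k) ^ 2 - L_H * ρ k - (α + 1) * L1 ^ 2 > 0) :
    ∀ k, 1 ≤ k →
      0 < (ρ k - L_H) / 2 - (α + 1) * L1 ^ 2 / (2 * ρ k) ∧
      lagr C (x (k + 1)) (y (k + 1)) (μ (k + 1)) (ρ (k + 1))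
          - lagr C (x k) (y k) (μ k) (ρ k)
        ≤ -(((ρ k - L_H) / 2 - (α + 1) * L1 ^ 2 / (2 * ρ k))
            * vnorm (x (k + 1) - x k) ^ 2) := by
  -- strong convexity bound from the Hessian condition
  have hss : ∀ (r : ℝ), L_H < r → ∀ e : Fin n → ℝ,
      (r - L_H) / 2 * vdot e e ≤ vdot e (C.mulVec e) + r / 2 * vdot e e := by
    intro r hr e
    have h1 : 0 ≤ dotProduct e (((2 : ℝ) • C + L_H • (1 : Matrix (Fin n) (Fin n) ℝ)).mulVec e) := by
      have := hHess.dotProduct_mulVec_nonneg e; simpa using this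
    have h2 : dotProduct e (((2 : ℝ) • C + L_H • (1 : Matrix (Fin n) (Fin n) ℝ)).mulVec e)
        = 2 * vdot e (C.mulVec e) + L_H * vdot e e := by
      simp only [Matrix.add_mulVec, Matrix.smul_mulVec, Matrix.one_mulVec,
        dotProduct_add, dotProduct_smul, vdot_eq, smul_eq_mul]
    have h3 := vdot_self_nonneg e
    rw [h2] at h1
    nlinarith
  -- gradient-zero at the x-update
  have key : ∀ k, (2 : ℝ) • C.mulVec (x (k + 1)) + μ (k + 1) = 0 := by
    intro k
    have hrne : ρ k ≠ 0 := ne_of_gt (hρpos k)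
    have harg : ∀ w : Fin n → ℝ,
        w - y (k + 1) + (ρ k)⁻¹ • μ k = w - (y (k + 1) - (ρ k)⁻¹ • μ k) := by
      intro w; abel
    have hmin : ∀ w : Fin n → ℝ,
        vdot (x (k + 1)) (C.mulVec (x (k + 1)))
            + ρ k / 2 * vdot (x (k + 1) - (y (k + 1) - (ρ k)⁻¹ • μ k))
                (x (k + 1) - (y (k + 1) - (ρ k)⁻¹ • μ k))
          ≤ vdot w (C.mulVec w)
            + ρ k / 2 * vdot (w - (y (k + 1) - (ρ k)⁻¹ • μ k))
                (w - (y (k + 1) - (ρ k)⁻¹ • μ k)) := by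
      intro w
      have h := hx k w
      rwa [harg, harg, vnorm_sq, vnorm_sq] at h
    have h0 := grad_zero C hC L_H (ρ k) (hρLH k) (hss (ρ k) (hρLH k)) (x (k + 1))
      (y (k + 1) - (ρ k)⁻¹ • μ k) hmin
    have hrb : ρ k • (x (k + 1) - (y (k + 1) - (ρ k)⁻¹ • μ k))
        = ρ k • (x (k + 1) - y (k + 1)) + μ k := by
      have h2 : x (k + 1) - (y (k + 1) - (ρ k)⁻¹ • μ k)
          = (x (k + 1) - y (k + 1)) + (ρ k)⁻¹ • μ k := by abel
      rw [h2, smul_add, smul_smul, mul_inv_cancel₀ hrne, one_smul]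
    rw [hrb] at h0
    rw [hμ k]
    calc (2 : ℝ) • C.mulVec (x (k + 1)) + (μ k + ρ k • (x (k + 1) - y (k + 1)))
        = (2 : ℝ) • C.mulVec (x (k + 1)) + (ρ k • (x (k + 1) - y (k + 1)) + μ k) := by abel
      _ = 0 := h0
  -- main step
  intro k hk
  obtain ⟨j, rfl⟩ : ∃ j, k = j + 1 := ⟨k - 1, (Nat.succ_pred_eq_of_pos hk).symm⟩
  set k := j + 1 with hkdef
  have hrpos := hρpos k
  have hrne : (ρ k) ≠ 0 := ne_of_gt hrpos
  have hc1eq : (ρ k - L_H) / 2 - (α + 1) * L1 ^ 2 / (2 * ρ k)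
      = ((ρ k) ^ 2 - L_H * ρ k - (α + 1) * L1 ^ 2) / (2 * ρ k) := by
    field_simp
  have hc1 : 0 < (ρ k - L_H) / 2 - (α + 1) * L1 ^ 2 / (2 * ρ k) := by
    rw [hc1eq]
    exact div_pos (hquad k) (by linarith)
  refine ⟨hc1, ?_⟩
  -- abbreviations
  set D : ℝ := vdot (x (k + 1) - x k) (x (k + 1) - x k) with hD
  have hDnn : 0 ≤ D := vdot_self_nonneg _
  have hDD : vdot (x k - x (k + 1)) (x k - x (k + 1)) = D := by
    have h : x k - x (k + 1) = -(x (k + 1) - x k) := by abel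
    rw [h, vdot_neg_neg]
  -- T3 : y-update descent
  have hT3 : lagr C (x k) (y (k + 1)) (μ k) (ρ k) ≤ lagr C (x k) (y k) (μ k) (ρ k) := by
    unfold lagr
    rw [lagr_eq' C _ _ _ _ hrne, lagr_eq' C _ _ _ _ hrne]
    have h := (hy k).2 (y k) (hy j).1
    rw [vnorm_sq, vnorm_sq] at h
    have := mul_le_mul_of_nonneg_left h (by linarith : (0:ℝ) ≤ ρ k / 2)
    linarith
  -- T2 : x-update descent
  have hT2 : lagr C (x (k + 1)) (y (k + 1)) (μ k) (ρ k) + (ρ k - L_H) / 2 * D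
      ≤ lagr C (x k) (y (k + 1)) (μ k) (ρ k) := by
    unfold lagr
    rw [lagr_eq' C _ _ _ _ hrne, lagr_eq' C _ _ _ _ hrne]
    set b : Fin n → ℝ := y (k + 1) - (ρ k)⁻¹ • μ k with hb
    have harg : ∀ w : Fin n → ℝ, w - y (k + 1) + (ρ k)⁻¹ • μ k = w - b := by
      intro w; rw [hb]; abel
    rw [harg, harg]
    set e : Fin n → ℝ := x k - x (k + 1) with he
    have hxk : x k = x (k + 1) + (1 : ℝ) • e := by rw [one_smul, he]; abel
    have hexp := quad_expand C hC (x (k + 1)) e b (ρ k) 1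
    have hg0 : (2 : ℝ) • C.mulVec (x (k + 1)) + ρ k • (x (k + 1) - b) = 0 := by
      have h1 := key k
      rw [hμ k] at h1
      have hrb : ρ k • (x (k + 1) - b) = ρ k • (x (k + 1) - y (k + 1)) + μ k := by
        rw [hb]
        have h2 : x (k + 1) - (y (k + 1) - (ρ k)⁻¹ • μ k)
            = (x (k + 1) - y (k + 1)) + (ρ k)⁻¹ • μ k := by abel
        rw [h2, smul_add, smul_smul, mul_inv_cancel₀ hrne, one_smul]
      rw [hrb]
      calc (2:ℝ) • C.mulVec (x (k + 1)) + (ρ k • (x (k + 1) - y (k + 1)) + μ k)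
          = (2:ℝ) • C.mulVec (x (k + 1)) + (μ k + ρ k • (x (k + 1) - y (k + 1))) := by abel
        _ = 0 := h1
    rw [hg0] at hexp
    have hzero : vdot (0 : Fin n → ℝ) e = 0 := by simp [vdot]
    rw [hzero] at hexp
    have hstr := hss (ρ k) (hρLH k) e
    have hee : vdot e e = D := by rw [he, hDD]
    rw [hxk, hexp]
    rw [hee] at hstr
    rw [hee] at hexp ⊢
    nlinarith [hstr, hexp]
  -- T1 : dual & penalty update
  set v : Fin n → ℝ := x (k + 1) - y (k + 1) with hv
  have hT1 : lagr C (x (k + 1)) (y (k + 1)) (μ (k + 1)) (ρ (k + 1))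
      - lagr C (x (k + 1)) (y (k + 1)) (μ k) (ρ k)
      = (α + 1) * ρ k / 2 * vdot v v := by
    unfold lagr
    rw [vnorm_sq, hμ k, hρupd k, ← hv]
    simp only [vdot_eq, add_dotProduct, smul_dotProduct, smul_eq_mul]
    ring
  have hμk : μ k = -((2 : ℝ) • C.mulVec (x k)) := by
    have := key j
    have h : μ (j + 1) = -((2 : ℝ) • C.mulVec (x (j + 1))) := by
      rw [eq_neg_iff_add_eq_zero]
      calc μ (j+1) + (2:ℝ) • C.mulVec (x (j+1))
          = (2:ℝ) • C.mulVec (x (j+1)) + μ (j+1) := by abel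
        _ = 0 := key j
    exact h
  have hμk1 : μ (k + 1) = -((2 : ℝ) • C.mulVec (x (k + 1))) := by
    rw [eq_neg_iff_add_eq_zero]
    calc μ (k+1) + (2:ℝ) • C.mulVec (x (k+1))
        = (2:ℝ) • C.mulVec (x (k+1)) + μ (k+1) := by abel
      _ = 0 := key k
  -- bound vdot v v
  set w : Fin n → ℝ := (2 : ℝ) • C.mulVec (x k) - (2 : ℝ) • C.mulVec (x (k + 1)) with hw
  have hrv : ρ k • v = w := by
    have h1 : ρ k • v = μ (k + 1) - μ k := by rw [hμ k]; abel
    rw [h1, hμk, hμk1, hw]; abel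
  have hvw : v = (ρ k)⁻¹ • w := by
    rw [← hrv, smul_smul, inv_mul_cancel₀ hrne, one_smul]
  have hvv : vdot v v = (ρ k)⁻¹ * ((ρ k)⁻¹ * vdot w w) := by
    rw [hvw]
    simp only [vdot_eq, smul_dotProduct, dotProduct_smul, smul_eq_mul]
  have hwbound : vdot w w ≤ L1 ^ 2 * D := by
    have h1 := hLip (x k) (x (k + 1))
    have h2 : vnorm w ^ 2 ≤ (L1 * vnorm (x k - x (k + 1))) ^ 2 := by
      have := vnorm_nonneg' w
      nlinarith [h1, vnorm_nonneg' (x k - x (k+1))]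
    rw [vnorm_sq] at h2
    have h3 : (L1 * vnorm (x k - x (k + 1))) ^ 2 = L1 ^ 2 * vdot (x k - x (k+1)) (x k - x (k+1)) := by
      rw [mul_pow, vnorm_sq]
    rw [h3, hDD] at h2
    exact h2
  have hT1b : lagr C (x (k + 1)) (y (k + 1)) (μ (k + 1)) (ρ (k + 1))
      - lagr C (x (k + 1)) (y (k + 1)) (μ k) (ρ k)
      ≤ (α + 1) * L1 ^ 2 / (2 * ρ k) * D := by
    rw [hT1, hvv]
    have hαpos : (0:ℝ) < α + 1 := by linarith
    have : (α + 1) * ρ k / 2 * ((ρ k)⁻¹ * ((ρ k)⁻¹ * vdot w w))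
        = (α + 1) / (2 * ρ k) * vdot w w := by field_simp
    rw [this]
    calc (α + 1) / (2 * ρ k) * vdot w w
        ≤ (α + 1) / (2 * ρ k) * (L1 ^ 2 * D) := by
          apply mul_le_mul_of_nonneg_left hwbound
          positivity
      _ = (α + 1) * L1 ^ 2 / (2 * ρ k) * D := by ring
  -- combine
  rw [vnorm_sq, ← hD]
  linarith [hT1b, hT2, hT3]
end

section
/- Let N be a real p×q matrix and set λ = ‖N‖₂² (the square of its spectral norm). Then the symmetric block matrix H = [[I_p + NNᵀ, −N], [−Nᵀ, I_q]] is positive definite, and H ⪰ σ I with σ = 1 − (√(λ² + 4λ) − λ)/2 > 0; i.e., the smallest eigenvalue of H is at least 1 − (√(λ² + 4λ) − λ)/2. -/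
open Matrix
open scoped Matrix.Norms.L2Operator

private lemma dot_self_nonneg' {k : ℕ} (v : Fin k → ℝ) : 0 ≤ v ⬝ᵥ v :=
  Finset.sum_nonneg fun i _ => mul_self_nonneg _

private lemma dot_eq_sq' {k : ℕ} (v : Fin k → ℝ) :
    v ⬝ᵥ v = ‖(WithLp.equiv 2 (Fin k → ℝ)).symm v‖ ^ 2 := by
  rw [EuclideanSpace.norm_eq, Real.sq_sqrt (by positivity)]
  simp [dotProduct, WithLp.equiv_symm_apply, PiLp.toLp_apply, Real.norm_eq_abs, sq_abs, sq]

private lemma dot_cauchy {k : ℕ} (a b : Fin k → ℝ) :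
    a ⬝ᵥ b ≤ Real.sqrt (a ⬝ᵥ a) * Real.sqrt (b ⬝ᵥ b) := by
  have h := real_inner_le_norm ((WithLp.equiv 2 (Fin k → ℝ)).symm a)
    ((WithLp.equiv 2 (Fin k → ℝ)).symm b)
  rw [dot_eq_sq' a, dot_eq_sq' b, Real.sqrt_sq (norm_nonneg _), Real.sqrt_sq (norm_nonneg _)]
  refine le_trans (le_of_eq ?_) h
  simp [PiLp.inner_apply, dotProduct, WithLp.equiv_symm_apply, PiLp.toLp_apply, RCLike.inner_apply, mul_comm]

private lemma dot_NT_le' {p q : ℕ} (N : Matrix (Fin p) (Fin q) ℝ) (u : Fin p → ℝ) :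
    (Nᵀ *ᵥ u) ⬝ᵥ (Nᵀ *ᵥ u) ≤ ‖N‖ ^ 2 * (u ⬝ᵥ u) := by
  have h := Matrix.l2_opNorm_mulVec Nᵀ ((WithLp.equiv 2 (Fin p → ℝ)).symm u)
  have hT : ‖Nᵀ‖ = ‖N‖ := by
    rw [← Matrix.conjTranspose_eq_transpose_of_trivial, Matrix.l2_opNorm_conjTranspose]
  rw [hT] at h
  rw [dot_eq_sq' (Nᵀ *ᵥ u), dot_eq_sq' u]
  have h2 : ‖(WithLp.equiv 2 (Fin q → ℝ)).symm (Nᵀ *ᵥ u)‖ ≤ ‖N‖ * ‖(WithLp.equiv 2 (Fin p → ℝ)).symm u‖ := h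
  nlinarith [norm_nonneg ((WithLp.equiv 2 (Fin q → ℝ)).symm (Nᵀ *ᵥ u)),
    norm_nonneg ((WithLp.equiv 2 (Fin p → ℝ)).symm u), norm_nonneg N]

private lemma quad_form {p q : ℕ} (N : Matrix (Fin p) (Fin q) ℝ) (s : ℝ)
    (x : Fin p ⊕ Fin q → ℝ) :
    x ⬝ᵥ ((fromBlocks (1 + N * Nᵀ) (-N) (-Nᵀ) 1 - s • 1) *ᵥ x) =
      (1 - s) * ((x ∘ Sum.inl) ⬝ᵥ (x ∘ Sum.inl))
      + (Nᵀ *ᵥ (x ∘ Sum.inl)) ⬝ᵥ (Nᵀ *ᵥ (x ∘ Sum.inl))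
      - 2 * ((Nᵀ *ᵥ (x ∘ Sum.inl)) ⬝ᵥ (x ∘ Sum.inr))
      + (1 - s) * ((x ∘ Sum.inr) ⬝ᵥ (x ∘ Sum.inr)) := by
  have hx : x = Sum.elim (x ∘ Sum.inl) (x ∘ Sum.inr) := (Sum.elim_comp_inl_inr x).symm
  set u := x ∘ Sum.inl with hu
  set v := x ∘ Sum.inr with hv
  rw [hx, sub_mulVec, fromBlocks_mulVec]
  simp only [smul_mulVec, one_mulVec, Sum.elim_comp_inl, Sum.elim_comp_inr]
  rw [show s • Sum.elim u v = Sum.elim (s • u) (s • v) by ext i; cases i <;> simp]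
  rw [show (Sum.elim (((1 + N * Nᵀ) *ᵥ u) + (-N) *ᵥ v) ((-Nᵀ) *ᵥ u + v)
      - Sum.elim (s • u) (s • v))
    = Sum.elim (((1 + N * Nᵀ) *ᵥ u) + (-N) *ᵥ v - s • u) ((-Nᵀ) *ᵥ u + v - s • v) by
      ext i; cases i <;> simp]
  rw [sumElim_dotProduct_sumElim]
  have h1 : u ⬝ᵥ ((N * Nᵀ) *ᵥ u) = (Nᵀ *ᵥ u) ⬝ᵥ (Nᵀ *ᵥ u) := by
    rw [← mulVec_mulVec, dotProduct_mulVec, ← mulVec_transpose, dotProduct_comm]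
  have h2 : u ⬝ᵥ (N *ᵥ v) = (Nᵀ *ᵥ u) ⬝ᵥ v := by
    rw [dotProduct_mulVec, ← mulVec_transpose]
  have h3 : v ⬝ᵥ (Nᵀ *ᵥ u) = (Nᵀ *ᵥ u) ⬝ᵥ v := dotProduct_comm _ _
  simp only [add_mulVec, one_mulVec, neg_mulVec, dotProduct_add, dotProduct_sub,
    dotProduct_neg, dotProduct_smul, h1, h2, h3, smul_eq_mul]
  ring

/-- for a real `p×q` matrix `N` with `λ = ‖N‖₂²` (square of the spectral
norm), the block matrix `H = [[I + NNᵀ, −N], [−Nᵀ, I]]` is positive definite and satisfies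
`H ⪰ σI` with `σ = 1 − (√(λ² + 4λ) − λ)/2 > 0`. -/
theorem stmt14 {p q : ℕ} (N : Matrix (Fin p) (Fin q) ℝ) (lam : ℝ)
    (hlam : lam = ‖N‖ ^ 2) :
    (fromBlocks (1 + N * Nᵀ) (-N) (-Nᵀ) 1).PosDef ∧
    0 < 1 - (Real.sqrt (lam ^ 2 + 4 * lam) - lam) / 2 ∧
    (fromBlocks (1 + N * Nᵀ) (-N) (-Nᵀ) 1
      - (1 - (Real.sqrt (lam ^ 2 + 4 * lam) - lam) / 2) • 1).PosSemidef := by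
  have hl0 : 0 ≤ lam := hlam ▸ sq_nonneg _
  set s' := Real.sqrt (lam ^ 2 + 4 * lam) with hs'
  have hs2 : s' ^ 2 = lam ^ 2 + 4 * lam := Real.sq_sqrt (by positivity)
  have hs0 : 0 ≤ s' := Real.sqrt_nonneg _
  set t := (s' - lam) / 2 with htdef
  have ht0 : 0 ≤ t := by rw [htdef]; nlinarith
  have ht2 : t ^ 2 + lam * t - lam = 0 := by rw [htdef]; nlinarith
  have ht1 : t < 1 := by rw [htdef]; nlinarith
  clear_value s' t
  have herm : (fromBlocks (1 + N * Nᵀ) (-N) (-Nᵀ) 1).IsHermitian := by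
    simp only [Matrix.IsHermitian, fromBlocks_conjTranspose,
      conjTranspose_eq_transpose_of_trivial, fromBlocks_transpose, transpose_add, transpose_mul,
      transpose_one, transpose_neg, transpose_transpose]
  refine ⟨posDef_iff_dotProduct_mulVec.mpr ⟨herm, ?_⟩, by linarith,
    posSemidef_iff_dotProduct_mulVec.mpr ⟨?_, ?_⟩⟩
  · intro x hx
    have hq := quad_form N 0 x
    rw [show (fromBlocks (1 + N * Nᵀ) (-N) (-Nᵀ) 1 - (0:ℝ) • 1)
        = fromBlocks (1 + N * Nᵀ) (-N) (-Nᵀ) 1 by simp] at hq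
    rw [star_trivial, hq]
    set u := x ∘ Sum.inl with hu
    set v := x ∘ Sum.inr with hv
    set w := Nᵀ *ᵥ u with hw
    have hwv : 0 ≤ w ⬝ᵥ w - 2 * (w ⬝ᵥ v) + v ⬝ᵥ v := by
      have h := dot_self_nonneg' (w - v)
      rw [sub_dotProduct, dotProduct_sub, dotProduct_sub, dotProduct_comm v w] at h
      linarith
    by_cases hu0 : u = 0
    · have hv0 : v ≠ 0 := by
        intro hv0
        apply hx
        funext i
        cases i with
        | inl i => exact congrFun hu0 i
        | inr i => exact congrFun hv0 i
      have hB : 0 < v ⬝ᵥ v :=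
        lt_of_le_of_ne (dot_self_nonneg' v) (Ne.symm (fun h => hv0 (dotProduct_self_eq_zero.mp h)))
      have hw0 : w = 0 := by rw [hw, hu0, mulVec_zero]
      rw [hu0, hw0]
      simp only [dotProduct_zero, zero_dotProduct]
      linarith
    · have hA : 0 < u ⬝ᵥ u :=
        lt_of_le_of_ne (dot_self_nonneg' u) (Ne.symm (fun h => hu0 (dotProduct_self_eq_zero.mp h)))
      nlinarith
  · exact herm.sub (by simp [Matrix.IsHermitian])
  · intro x
    have hq := quad_form N (1 - t) x
    rw [star_trivial, hq]
    set u := x ∘ Sum.inl with hu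
    set v := x ∘ Sum.inr with hv
    set w := Nᵀ *ᵥ u with hw
    set A := u ⬝ᵥ u with hA
    set B := v ⬝ᵥ v with hB
    set P := w ⬝ᵥ w with hP
    set C := w ⬝ᵥ v with hC
    have hA0 : 0 ≤ A := dot_self_nonneg' u
    have hB0 : 0 ≤ B := dot_self_nonneg' v
    have hP0 : 0 ≤ P := dot_self_nonneg' w
    have hPla : P ≤ lam * A := by rw [hlam, hP, hw, hA]; exact dot_NT_le' N u
    have hCle : C ≤ Real.sqrt P * Real.sqrt B := dot_cauchy w v
    clear_value u v w A B P C
    rcases eq_or_lt_of_le ht0 with h0 | hpos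
    · have hlam0 : lam = 0 := by nlinarith
      have hPz : P = 0 := le_antisymm (by nlinarith) hP0
      have hCz : C ≤ 0 := by
        rw [hPz, Real.sqrt_zero, zero_mul] at hCle; exact hCle
      nlinarith
    · have h2tC : 2 * t * C ≤ P + t ^ 2 * B := by
        have h1 : 2 * t * C ≤ 2 * t * (Real.sqrt P * Real.sqrt B) :=
          mul_le_mul_of_nonneg_left hCle (by positivity)
        nlinarith [sq_nonneg (Real.sqrt P - t * Real.sqrt B), Real.sq_sqrt hP0,
          Real.sq_sqrt hB0, Real.sqrt_nonneg P, Real.sqrt_nonneg B]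
      have hkey : (t ^ 2 + lam * t - lam) * A = 0 := by rw [ht2]; ring
      have hmul : 0 ≤ (1 - t) * (lam * A - P) :=
        mul_nonneg (by linarith) (by linarith)
      have hgoal : 0 ≤ t * (t * A + P - 2 * C + t * B) := by linarith [hmul, hkey, h2tC]
      have hfin : 0 ≤ t * A + P - 2 * C + t * B := (mul_nonneg_iff_of_pos_left hpos).mp hgoal
      linarith
end

section
/- Let Z, Λ₁ be n×n real matrices, X, Λ₂ be n×r real matrices, and ρ > 0. The unique minimizer over Y ∈ ℝ^{n×r} of Y ↦ ‖Z − XYᵀ + Λ₁/ρ‖_F² + ‖X − Y + Λ₂/ρ‖_F² is given in closed form by Y = ((1/ρ)(Λ₁ᵀX + Λ₂) + ZᵀX + X)(I + XᵀX)⁻¹, where I + XᵀX is positive definite and hence invertible. -/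
open Matrix

/-- Squared Frobenius norm. -/
def frobSq {n r : ℕ} (A : Matrix (Fin n) (Fin r) ℝ) : ℝ := ∑ i, ∑ j, (A i j) ^ 2

lemma frobSq_eq_trace {n r : ℕ} (A : Matrix (Fin n) (Fin r) ℝ) :
    frobSq A = (Aᵀ * A).trace := by
  simp only [frobSq, Matrix.trace, Matrix.diag, Matrix.mul_apply, transpose_apply]
  rw [Finset.sum_comm]
  simp [sq]

lemma frobSq_nonneg {n r : ℕ} (A : Matrix (Fin n) (Fin r) ℝ) : 0 ≤ frobSq A :=
  Finset.sum_nonneg fun _ _ => Finset.sum_nonneg fun _ _ => sq_nonneg _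

lemma frobSq_eq_zero_iff {n r : ℕ} {A : Matrix (Fin n) (Fin r) ℝ} :
    frobSq A = 0 ↔ A = 0 := by
  constructor
  · intro h
    ext i j
    have h1 := (Finset.sum_eq_zero_iff_of_nonneg
      (fun i _ => Finset.sum_nonneg fun j _ => sq_nonneg (A i j))).mp h i (Finset.mem_univ i)
    have h2 := (Finset.sum_eq_zero_iff_of_nonneg
      (fun j _ => sq_nonneg (A i j))).mp h1 j (Finset.mem_univ j)
    simpa using pow_eq_zero_iff (two_ne_zero) |>.mp h2
  · intro h; simp [h, frobSq]

lemma frobSq_pos {n r : ℕ} {A : Matrix (Fin n) (Fin r) ℝ} (hA : A ≠ 0) : 0 < frobSq A :=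
  lt_of_le_of_ne (frobSq_nonneg A) (fun h => hA (frobSq_eq_zero_iff.mp h.symm))

lemma frobSq_sub {n r : ℕ} (M N : Matrix (Fin n) (Fin r) ℝ) :
    frobSq (M - N) = frobSq M - 2 * (Mᵀ * N).trace + frobSq N := by
  simp only [frobSq_eq_trace, transpose_sub, Matrix.sub_mul, Matrix.mul_sub, trace_sub]
  have h : (Nᵀ * M).trace = (Mᵀ * N).trace := by
    rw [← Matrix.trace_transpose (Mᵀ * N), transpose_mul, transpose_transpose]
  rw [h]; ring

/-- the Y-subproblem of the matrix-form ADMM,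
`Y ↦ ‖Z − XYᵀ + Λ₁/ρ‖_F² + ‖X − Y + Λ₂/ρ‖_F²`, has the unique minimizer
`Y₀ = ((1/ρ)(Λ₁ᵀX + Λ₂) + ZᵀX + X)(I + XᵀX)⁻¹`, where `I + XᵀX` is positive definite
(hence invertible). -/
theorem stmt18 {n r : ℕ} (Z Λ1 : Matrix (Fin n) (Fin n) ℝ)
    (X Λ2 : Matrix (Fin n) (Fin r) ℝ) (ρ : ℝ) (hρ : 0 < ρ) :
    ((1 : Matrix (Fin r) (Fin r) ℝ) + Xᵀ * X).PosDef ∧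
    IsUnit ((1 : Matrix (Fin r) (Fin r) ℝ) + Xᵀ * X) ∧
    (∀ Y : Matrix (Fin n) (Fin r) ℝ,
      Y ≠ ((1 / ρ) • (Λ1ᵀ * X + Λ2) + Zᵀ * X + X)
            * ((1 : Matrix (Fin r) (Fin r) ℝ) + Xᵀ * X)⁻¹ →
      frobSq (Z - X * (((1 / ρ) • (Λ1ᵀ * X + Λ2) + Zᵀ * X + X)
            * ((1 : Matrix (Fin r) (Fin r) ℝ) + Xᵀ * X)⁻¹)ᵀ + ρ⁻¹ • Λ1)
        + frobSq (X - ((1 / ρ) • (Λ1ᵀ * X + Λ2) + Zᵀ * X + X)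
            * ((1 : Matrix (Fin r) (Fin r) ℝ) + Xᵀ * X)⁻¹ + ρ⁻¹ • Λ2)
      < frobSq (Z - X * Yᵀ + ρ⁻¹ • Λ1) + frobSq (X - Y + ρ⁻¹ • Λ2)) := by
  have hXX : (Xᵀ * X).PosSemidef := by
    simpa using Matrix.posSemidef_conjTranspose_mul_self X
  set S : Matrix (Fin r) (Fin r) ℝ := 1 + Xᵀ * X with hSdef
  have hS : S.PosDef := Matrix.PosDef.add_posSemidef Matrix.PosDef.one hXX
  have hU : IsUnit S := hS.isUnit
  refine ⟨hS, hU, ?_⟩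
  intro Y hY
  set A : Matrix (Fin n) (Fin n) ℝ := Z + ρ⁻¹ • Λ1 with hAdef
  set B : Matrix (Fin n) (Fin r) ℝ := X + ρ⁻¹ • Λ2 with hBdef
  set C : Matrix (Fin n) (Fin r) ℝ := (1 / ρ) • (Λ1ᵀ * X + Λ2) + Zᵀ * X + X with hCdef
  set Y₀ : Matrix (Fin n) (Fin r) ℝ := C * S⁻¹ with hY₀def
  have hC : C = Aᵀ * X + B := by
    simp only [hCdef, hAdef, hBdef, transpose_add, transpose_smul, Matrix.add_mul,
      Matrix.smul_mul, one_div, smul_add]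
    abel
  have hnormal : Y₀ * S = Aᵀ * X + B := by
    rw [hY₀def, Matrix.mul_assoc, Matrix.nonsing_inv_mul S
      ((Matrix.isUnit_iff_isUnit_det S).mp hU), Matrix.mul_one, hC]
  have hn : Y₀ + Y₀ * (Xᵀ * X) = Aᵀ * X + B := by
    rw [← hnormal, hSdef, Matrix.mul_add, Matrix.mul_one]
  -- rewrite the objective
  have e1 : ∀ W : Matrix (Fin n) (Fin r) ℝ, Z - X * Wᵀ + ρ⁻¹ • Λ1 = A - X * Wᵀ := by
    intro W; rw [hAdef]; abel
  have e2 : ∀ W : Matrix (Fin n) (Fin r) ℝ, X - W + ρ⁻¹ • Λ2 = B - W := by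
    intro W; rw [hBdef]; abel
  rw [e1, e2, e1, e2]
  set D : Matrix (Fin n) (Fin r) ℝ := Y - Y₀ with hDdef
  have hD : D ≠ 0 := sub_ne_zero.mpr hY
  have hYeq : Y = Y₀ + D := by rw [hDdef]; abel
  have hsplit1 : A - X * Yᵀ = (A - X * Y₀ᵀ) - X * Dᵀ := by
    rw [hYeq, transpose_add, Matrix.mul_add]; abel
  have hsplit2 : B - Y = (B - Y₀) - D := by rw [hYeq]; abel
  rw [hsplit1, hsplit2, frobSq_sub (A - X * Y₀ᵀ) (X * Dᵀ), frobSq_sub (B - Y₀) D]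
  have hz : (A - X * Y₀ᵀ)ᵀ * X + (B - Y₀) = 0 := by
    have h0 : Aᵀ * X + B - (Y₀ + Y₀ * (Xᵀ * X)) = 0 := by rw [hn, sub_self]
    rw [transpose_sub, transpose_mul, transpose_transpose, Matrix.sub_mul, Matrix.mul_assoc,
      ← h0]
    abel
  have hc1 : ((A - X * Y₀ᵀ)ᵀ * (X * Dᵀ)).trace = (Dᵀ * ((A - X * Y₀ᵀ)ᵀ * X)).trace := by
    rw [← Matrix.mul_assoc, Matrix.trace_mul_comm]
  have hc2 : ((B - Y₀)ᵀ * D).trace = (Dᵀ * (B - Y₀)).trace := by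
    rw [← Matrix.trace_transpose ((B - Y₀)ᵀ * D), transpose_mul, transpose_transpose]
  have hcross : ((A - X * Y₀ᵀ)ᵀ * (X * Dᵀ)).trace + ((B - Y₀)ᵀ * D).trace = 0 := by
    rw [hc1, hc2, ← trace_add, ← Matrix.mul_add, hz, Matrix.mul_zero, trace_zero]
  have h1 : 0 ≤ frobSq (X * Dᵀ) := frobSq_nonneg _
  have h2 : 0 < frobSq D := frobSq_pos hD
  linarith
end
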